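/- Let (X, μ) be a finite measure space, let M > 0, and let g_n, g: X → ℝ be measurable with |g_n| ≤ M μ-a.e. for every n, such that ∫_X g_n h dμ → ∫_X g h dμ for every h ∈ L¹(μ). Let L_n, L: X → ℝ be measurable with L_n ∈ L¹(μ), L_n → L μ-almost everywhere, sup_n ∫_X |L_n| dμ < ∞, and suppose the family {L_n} is uniformly integrable: for every ε > 0 there exists δ > 0 such that for every measurable set A with μ(A) < δ, sup_n ∫_A |L_n| dμ ≤ ε. Then L ∈ L¹(μ) and for every bounded measurable φ: X → ℝ, ∫_X φ g_n L_n dμ → ∫_X φ g L dμ as n → ∞. -/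

import Mathlib

open MeasureTheory Filter

/-- Product convergence: on a finite measure space, if `g_n` is uniformly
bounded and converges weak-* (tested against every `L¹` function) to `g`, and `L_n → L`
a.e. with uniformly bounded and uniformly integrable `L¹` norms, then `L ∈ L¹` and
`∫ φ g_n L_n → ∫ φ g L` for every bounded measurable `φ`. -/
theorem weakstar_ae_product_convergence
    {X : Type*} [MeasurableSpace X] (μ : Measure X) [IsFiniteMeasure μ]
    (M : ℝ) (hM : 0 < M)
    (g : ℕ → X → ℝ) (glim : X → ℝ)
    (hgmeas : ∀ n, Measurable (g n)) (hglimmeas : Measurable glim)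
    (hgbdd : ∀ n, ∀ᵐ x ∂μ, |g n x| ≤ M)
    (hgweak : ∀ h : X → ℝ, Integrable h μ →
      Tendsto (fun n => ∫ x, g n x * h x ∂μ) atTop (nhds (∫ x, glim x * h x ∂μ)))
    (L : ℕ → X → ℝ) (Llim : X → ℝ)
    (hLmeas : ∀ n, Measurable (L n)) (hLlimmeas : Measurable Llim)
    (hLint : ∀ n, Integrable (L n) μ)
    (hLae : ∀ᵐ x ∂μ, Tendsto (fun n => L n x) atTop (nhds (Llim x)))
    (hLbdd : ∃ C : ℝ, ∀ n, ∫ x, |L n x| ∂μ ≤ C)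
    (hLui : ∀ ε : ℝ, 0 < ε → ∃ δ : ℝ, 0 < δ ∧ ∀ A : Set X, MeasurableSet A →
      μ A < ENNReal.ofReal δ → ∀ n, ∫ x in A, |L n x| ∂μ ≤ ε) :
    Integrable Llim μ ∧
      ∀ φ : X → ℝ, Measurable φ → (∃ M' : ℝ, ∀ x, |φ x| ≤ M') →
        Tendsto (fun n => ∫ x, φ x * g n x * L n x ∂μ) atTop
          (nhds (∫ x, φ x * glim x * Llim x ∂μ)) := by
  obtain ⟨C, hC⟩ := hLbdd
  -- the lintegral of ‖L n‖ equals ofReal of the integral of |L n|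
  have hlin : ∀ n, ∫⁻ x, (‖L n x‖₊ : ENNReal) ∂μ = ENNReal.ofReal (∫ x, |L n x| ∂μ) := by
    intro n
    show ∫⁻ x, ‖L n x‖ₑ ∂μ = _
    rw [← ofReal_integral_norm_eq_lintegral_enorm (hLint n)]
    simp [Real.norm_eq_abs]
  -- Llim is integrable, by Fatou
  have hLlimInt : Integrable Llim μ := by
    refine ⟨hLlimmeas.aestronglyMeasurable, ?_⟩
    show (∫⁻ x, (‖Llim x‖₊ : ENNReal) ∂μ) < ⊤
    have h1 : ∫⁻ x, (‖Llim x‖₊ : ENNReal) ∂μ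
        = ∫⁻ x, Filter.liminf (fun n => (‖L n x‖₊ : ENNReal)) atTop ∂μ := by
      refine lintegral_congr_ae ?_
      filter_upwards [hLae] with x hx
      have : Filter.Tendsto (fun n => (‖L n x‖₊ : ENNReal)) atTop (nhds (‖Llim x‖₊)) :=
        ENNReal.tendsto_coe.mpr hx.nnnorm
      exact this.liminf_eq.symm
    rw [h1]
    refine lt_of_le_of_lt (lintegral_liminf_le fun n => (hLmeas n).nnnorm.coe_nnreal_ennreal) ?_
    refine lt_of_le_of_lt
      (Filter.liminf_le_of_frequently_le' (x := ENNReal.ofReal C)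
        (Frequently.of_forall fun n =>
          (hlin n).le.trans (ENNReal.ofReal_le_ofReal (hC n))))
      ENNReal.ofReal_lt_top
  refine ⟨hLlimInt, ?_⟩
  -- uniform integrability in mathlib's sense
  have hUI : UnifIntegrable L 1 μ := by
    intro ε hε
    obtain ⟨δ, hδ, hA⟩ := hLui ε hε
    refine ⟨δ / 2, half_pos hδ, fun n s hs hμs => ?_⟩
    have hμs' : μ s < ENNReal.ofReal δ :=
      lt_of_le_of_lt hμs (ENNReal.ofReal_lt_ofReal_iff hδ |>.mpr (half_lt_self hδ))
    rw [eLpNorm_indicator_eq_eLpNorm_restrict hs, eLpNorm_one_eq_lintegral_enorm,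
      ← ofReal_integral_norm_eq_lintegral_enorm ((hLint n).restrict)]
    refine ENNReal.ofReal_le_ofReal ?_
    simpa [Real.norm_eq_abs] using hA s hs hμs' n
  -- Vitali: L n → Llim in L¹
  have hV : Tendsto (fun n => eLpNorm (L n - Llim) 1 μ) atTop (nhds 0) :=
    tendsto_Lp_finite_of_tendsto_ae le_rfl ENNReal.one_ne_top
      (fun n => (hLmeas n).aestronglyMeasurable)
      (memLp_one_iff_integrable.mpr hLlimInt) hUI hLae
  -- hence ∫ |L n - Llim| → 0
  have hr : Tendsto (fun n => ∫ x, |L n x - Llim x| ∂μ) atTop (nhds 0) := by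
    have h0 : Tendsto (fun n => (eLpNorm (L n - Llim) 1 μ).toReal) atTop (nhds 0) := by
      exact (ENNReal.tendsto_toReal (by simp)).comp hV
    refine h0.congr fun n => ?_
    rw [eLpNorm_one_eq_lintegral_enorm,
      ← ofReal_integral_norm_eq_lintegral_enorm ((hLint n).sub hLlimInt),
      ENNReal.toReal_ofReal (integral_nonneg fun x => norm_nonneg _)]
    simp [Real.norm_eq_abs]
  intro φ hφm hφbdd
  obtain ⟨M', hM'⟩ := hφbdd
  set K := max M' 0 with hK
  have hφK : ∀ x, |φ x| ≤ K := fun x => (hM' x).trans (le_max_left _ _)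
  have hK0 : 0 ≤ K := le_max_right _ _
  -- integrability of all products
  have hgK : ∀ n, ∀ᵐ x ∂μ, ‖φ x * g n x‖ ≤ K * M := by
    intro n
    filter_upwards [hgbdd n] with x hx
    rw [Real.norm_eq_abs, abs_mul]
    exact mul_le_mul (hφK x) hx (abs_nonneg _) hK0
  have hint1 : ∀ n, Integrable (fun x => φ x * g n x * L n x) μ := by
    intro n
    simpa [mul_assoc] using
      ((hLint n).bdd_mul ((hφm.mul (hgmeas n)).aestronglyMeasurable) (hgK n))
  have hint2 : ∀ n, Integrable (fun x => φ x * g n x * Llim x) μ := by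
    intro n
    simpa [mul_assoc] using
      (hLlimInt.bdd_mul ((hφm.mul (hgmeas n)).aestronglyMeasurable) (hgK n))
  have hφL : Integrable (fun x => φ x * Llim x) μ :=
    hLlimInt.bdd_mul hφm.aestronglyMeasurable
      (Eventually.of_forall fun x => by simpa [Real.norm_eq_abs] using hφK x)
  -- the "A" part tends to 0
  have hA : Tendsto (fun n => ∫ x, φ x * g n x * (L n x - Llim x) ∂μ) atTop (nhds 0) := by
    have hbound : ∀ n, ‖∫ x, φ x * g n x * (L n x - Llim x) ∂μ‖
        ≤ K * M * ∫ x, |L n x - Llim x| ∂μ := by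
      intro n
      rw [← integral_const_mul]
      refine norm_integral_le_of_norm_le ((((hLint n).sub hLlimInt).abs).const_mul _) ?_
      filter_upwards [hgbdd n] with x hx
      rw [Real.norm_eq_abs, abs_mul, abs_mul]
      refine mul_le_mul ?_ le_rfl (abs_nonneg _) (by positivity)
      exact mul_le_mul (hφK x) hx (abs_nonneg _) hK0
    have h2 : Tendsto (fun n => K * M * ∫ x, |L n x - Llim x| ∂μ) atTop (nhds 0) := by
      simpa using hr.const_mul (K * M)
    exact squeeze_zero_norm hbound h2
  -- the "B" part via weak-* convergence
  have hB : Tendsto (fun n => ∫ x, g n x * (φ x * Llim x) ∂μ) atTop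
      (nhds (∫ x, glim x * (φ x * Llim x) ∂μ)) := hgweak _ hφL
  have hB' : Tendsto (fun n => ∫ x, φ x * g n x * Llim x ∂μ) atTop
      (nhds (∫ x, φ x * glim x * Llim x ∂μ)) := by
    have e1 : (fun n => ∫ x, g n x * (φ x * Llim x) ∂μ)
        = fun n => ∫ x, φ x * g n x * Llim x ∂μ := by
      funext n; exact integral_congr_ae (Eventually.of_forall fun x => by ring)
    have e2 : (∫ x, glim x * (φ x * Llim x) ∂μ) = ∫ x, φ x * glim x * Llim x ∂μ :=
      integral_congr_ae (Eventually.of_forall fun x => by ring)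
    rw [← e1, ← e2]; exact hB
  have key : (fun n => ∫ x, φ x * g n x * L n x ∂μ)
      = fun n => (∫ x, φ x * g n x * (L n x - Llim x) ∂μ)
        + ∫ x, φ x * g n x * Llim x ∂μ := by
    funext n
    rw [← integral_add (by
        simpa [mul_sub, Pi.sub_def] using (hint1 n).sub (hint2 n)) (hint2 n)]
    exact integral_congr_ae (Eventually.of_forall fun x => by ring)
  rw [key]
  simpa using hA.add hB'
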